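/- First factorization (path object) in Cat: every functor F : A ⥤ B factors as F = K ⋙ G where K is injective on objects and an equivalence of categories, and G is an isofibration. Concretely, let P be the category whose objects are triples (a, β, b) with a an object of A, b an object of B, and β : F a ≅ b, and whose morphisms (a, β, b) → (a', β', b') are morphisms a → a' in A. Then K(a) = (a, id, F a) is a trivial cofibration and G(a, β, b) = b (with G on a morphism γ given by β' ∘ F γ ∘ β⁻¹) is an isofibration, and K ⋙ G = F. -/

import Mathlib

open CategoryTheory

universe v₁ v₂ u₁ u₂

variable {A : Type u₁} [Category.{v₁} A] {B : Type u₂} [Category.{v₂} B]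

/-- The path category of a functor `F : A ⥤ B`: objects are triples
`(a, β, b)` with `β : F a ≅ b`; morphisms are morphisms in `A`. -/
structure PathObj (F : A ⥤ B) where
  a : A
  b : B
  iso : F.obj a ≅ b

instance (F : A ⥤ B) : Category (PathObj F) where
  Hom x y := x.a ⟶ y.a
  id x := 𝟙 x.a
  comp f g := f ≫ g

/-- The trivial cofibration `K : A ⥤ P`, `K a = (a, id, F a)`. -/
def pathK (F : A ⥤ B) : A ⥤ PathObj F where
  obj a := ⟨a, F.obj a, Iso.refl _⟩
  map f := f

/-- The isofibration `G : P ⥤ B`, `G (a, β, b) = b`,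
`G γ = β' ∘ F γ ∘ β⁻¹`. -/
def pathG (F : A ⥤ B) : PathObj F ⥤ B where
  obj x := x.b
  map {x y} γ := x.iso.inv ≫ F.map γ ≫ y.iso.hom
  map_id := by intro x; simp [CategoryStruct.id]
  map_comp := by intros x y z f g; simp [CategoryStruct.comp]

/-- A functor is an isofibration if every isomorphism out of an object in its
image lifts strictly. -/
def Isofib {C D : Type*} [Category C] [Category D] (G : C ⥤ D) : Prop :=
  ∀ (x : C) (y : D) (β : G.obj x ≅ y), ∃ (x' : C) (α : x ≅ x') (h : G.obj x' = y),
    G.map α.hom ≫ eqToHom h = β.hom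

theorem path_object_factorization (F : A ⥤ B) :
    pathK F ⋙ pathG F = F ∧
    Function.Injective (pathK F).obj ∧
    (pathK F).IsEquivalence ∧
    Isofib (pathG F) := by
  refine ⟨?_, ?_, ?_, ?_⟩
  · refine CategoryTheory.Functor.ext (fun _ => rfl) ?_
    intro a a' f
    simp [pathK, pathG, Functor.comp]
    exact (Category.id_comp _).symm
  · intro a a' h
    exact congrArg PathObj.a h
  · have full : (pathK F).Full := ⟨fun {a a'} f => ⟨f, rfl⟩⟩
    have faithful : (pathK F).Faithful := ⟨fun {a a'} f g h => h⟩
    have ess : (pathK F).EssSurj := by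
      constructor
      intro x
      refine ⟨x.a, ⟨⟨𝟙 x.a, 𝟙 x.a, ?_, ?_⟩⟩⟩
      · show (𝟙 x.a ≫ 𝟙 x.a : x.a ⟶ x.a) = 𝟙 x.a; simp
      · show (𝟙 x.a ≫ 𝟙 x.a : x.a ⟶ x.a) = 𝟙 x.a; simp
    exact { }
  · intro x y β
    refine ⟨⟨x.a, y, x.iso ≪≫ β⟩, ⟨𝟙 x.a, 𝟙 x.a, ?_, ?_⟩, rfl, ?_⟩
    · show (𝟙 x.a ≫ 𝟙 x.a : x.a ⟶ x.a) = 𝟙 x.a; simp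
    · show (𝟙 x.a ≫ 𝟙 x.a : x.a ⟶ x.a) = 𝟙 x.a; simp
    · simp [pathG]; exact x.iso.inv_hom_id_assoc β.hom
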